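/- Let n ≥ 1 and let D_n be the (n+1)×(n+1) real matrix indexed by k,j ∈ {0,…,n} with entries [D_n]_{kj} = 2j/σ_k if j > k and j+k is odd, and 0 otherwise, where σ_0 = 2 and σ_k = 1 for k ≥ 1. Then the maximum over rows k of the sum ∑_j |[D_n]_{kj}| equals n(n+2)/2 if n is even and (n+1)²/2 − 2 if n is odd. -/
import Mathlib

def chebF (n k : ℕ) : ℕ :=
  ∑ j ∈ Finset.range (n + 1), if k < j ∧ Odd (j + k) then 2 * j else 0

lemma chebF_eq (n k : ℕ) :
    chebF n k = 2 * ((n + 1 - k) / 2) * (k + (n + 1 - k) / 2) := by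
  induction n with
  | zero =>
    have h0 : (1 - k) / 2 = 0 := by omega
    simp [chebF, h0]
  | succ n ih =>
    have step : chebF (n + 1) k
        = chebF n k + (if k < n + 1 ∧ Odd (n + 1 + k) then 2 * (n + 1) else 0) := by
      simp only [chebF]
      exact Finset.sum_range_succ _ _
    rw [step, ih]
    by_cases h : k < n + 1 ∧ Odd (n + 1 + k)
    · rw [if_pos h]
      obtain ⟨h1, h2⟩ := h
      rw [Nat.odd_iff] at h2
      set m := (n + 1 - k) / 2 with hm
      have e1 : (n + 1 + 1 - k) / 2 = m + 1 := by omega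
      have e2 : n + 1 = k + 2 * m + 1 := by omega
      rw [e1, e2]
      ring
    · rw [if_neg h, add_zero]
      have h' : ¬(k < n + 1 ∧ (n + 1 + k) % 2 = 1) := by rwa [Nat.odd_iff] at h
      have e1 : (n + 1 + 1 - k) / 2 = (n + 1 - k) / 2 := by omega
      rw [e1]

theorem chebyshev_diff_matrix_max_row_sum (n : ℕ) (hn : 1 ≤ n)
    (D : Matrix (Fin (n + 1)) (Fin (n + 1)) ℝ)
    (hD : ∀ k j : Fin (n + 1), D k j =
      if (k : ℕ) < (j : ℕ) ∧ Odd ((j : ℕ) + (k : ℕ)) then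
        2 * (j : ℕ) / (if (k : ℕ) = 0 then 2 else 1) else 0) :
    IsGreatest {s : ℝ | ∃ k : Fin (n + 1), 1 ≤ (k : ℕ) ∧ s = ∑ j, |D k j|}
      (if Even n then (n : ℝ) * (n + 2) / 2 else ((n : ℝ) + 1) ^ 2 / 2 - 2) := by
  have hrow : ∀ k : Fin (n + 1), 1 ≤ (k : ℕ) →
      ∑ j, |D k j| = ((chebF n (k : ℕ) : ℕ) : ℝ) := by
    intro k hk
    have hterm : ∀ j : Fin (n + 1), |D k j| =
        ((if (k : ℕ) < (j : ℕ) ∧ Odd ((j : ℕ) + (k : ℕ)) then 2 * (j : ℕ) else 0 : ℕ) : ℝ) := by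
      intro j
      rw [hD k j, if_neg (by omega : ¬((k : ℕ) = 0))]
      split_ifs with h
      · rw [Nat.div_one]
        exact abs_of_nonneg (by positivity)
      · simp
    simp_rw [hterm]
    rw [← Nat.cast_sum]
    norm_cast
    simp only [chebF]
    exact Fin.sum_univ_eq_sum_range (fun j => if (k : ℕ) < j ∧ Odd (j + (k : ℕ)) then 2 * j else 0)
      (n + 1)
  constructor
  · -- membership
    rcases Nat.even_or_odd n with he | ho
    · rw [if_pos he]
      refine ⟨⟨1, by omega⟩, by simp, ?_⟩
      rw [hrow _ (by simp), chebF_eq]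
      rw [Nat.even_iff] at he
      set t := n / 2 with htdef
      have e : (n + 1 - 1) / 2 = t := by omega
      have hn2 : n = 2 * t := by omega
      rw [e]
      push_cast
      rw [show (n : ℝ) = 2 * (t : ℝ) from by exact_mod_cast hn2]
      ring
    · rw [if_neg (by simpa [Nat.not_even_iff_odd] using ho)]
      rw [Nat.odd_iff] at ho
      by_cases h1 : n = 1
      · subst h1
        refine ⟨⟨1, by omega⟩, by simp, ?_⟩
        rw [hrow _ (by simp), chebF_eq]
        norm_num
      · have h3 : 3 ≤ n := by omega
        refine ⟨⟨2, by omega⟩, by simp, ?_⟩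
        rw [hrow _ (by simp), chebF_eq]
        set t := (n - 1) / 2 with htdef
        have e : (n + 1 - 2) / 2 = t := by omega
        have hn2 : n = 2 * t + 1 := by omega
        rw [e]
        push_cast
        rw [show (n : ℝ) = 2 * (t : ℝ) + 1 from by exact_mod_cast hn2]
        ring
  · -- upper bound
    rintro s ⟨k, hk1, rfl⟩
    rw [hrow k hk1, chebF_eq]
    have hk2 : (k : ℕ) ≤ n := by omega
    set m := (n + 1 - (k : ℕ)) / 2 with hm
    have h1 : (k : ℕ) + 2 * m ≤ n + 1 := by omega
    have h2 : 2 * m ≤ n := by omega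
    have h1' : ((k : ℕ) : ℝ) + 2 * (m : ℝ) ≤ (n : ℝ) + 1 := by exact_mod_cast h1
    have h2' : 2 * (m : ℝ) ≤ (n : ℝ) := by exact_mod_cast h2
    have hm0 : (0 : ℝ) ≤ (m : ℝ) := by positivity
    rcases Nat.even_or_odd n with he | ho
    · rw [if_pos he]
      push_cast
      nlinarith [mul_nonneg hm0 (by linarith : (0:ℝ) ≤ (n:ℝ) + 1 - 2*(m:ℝ) - ((k:ℕ):ℝ)),
        sq_nonneg ((n:ℝ) - 2*(m:ℝ))]
    · rw [if_neg (by simpa [Nat.not_even_iff_odd] using ho)]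
      rw [Nat.odd_iff] at ho
      have h3 : 2 * m + 1 ≤ n := by omega
      have h3' : 2 * (m : ℝ) + 1 ≤ (n : ℝ) := by exact_mod_cast h3
      push_cast
      nlinarith [mul_nonneg hm0 (by linarith : (0:ℝ) ≤ (n:ℝ) + 1 - 2*(m:ℝ) - ((k:ℕ):ℝ)),
        mul_nonneg (by linarith : (0:ℝ) ≤ (n:ℝ) - 2*(m:ℝ) - 1)
          (by linarith : (0:ℝ) ≤ (n:ℝ) - 2*(m:ℝ) + 3)]
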